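/- For any region divided into finitely many subareas with positive areas A_1,…,A_M and nonnegative populations n_1,…,n_M with total population n = ∑ n_i > 0, the standard population density ρ_S equals the population-weighted density ρ_W if and only if every subarea has positive population and all subareas have the same density n_i / A_i. -/

import Mathlib

/-- `ρ_S = ρ_W` if and only if every subarea has positive
population and all subareas have the same density `n i / A i`. -/
theorem standard_density_eq_population_weighted_density_iff
    (M : ℕ) (A n : Fin M → ℝ)
    (hA : ∀ i, 0 < A i) (hn : ∀ i, 0 ≤ n i)
    (hpos : 0 < ∑ i, n i) :
    (∑ i, n i) / (∑ i, A i) = (1 / ∑ i, n i) * ∑ i, (n i) ^ 2 / A i ↔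
    (∀ i, 0 < n i) ∧ ∀ i j, n i / A i = n j / A j := by
  have hM : M ≠ 0 := by rintro rfl; simp at hpos
  haveI : Nonempty (Fin M) := Fin.pos_iff_nonempty.mp (Nat.pos_of_ne_zero hM)
  have hS : 0 < ∑ i, A i := Finset.sum_pos (fun i _ => hA i) Finset.univ_nonempty
  set S := ∑ i, A i with hSdef
  set N := ∑ i, n i with hNdef
  constructor
  · intro h
    have hT : (∑ i, (n i) ^ 2 / A i) = N ^ 2 / S := by
      field_simp at h
      field_simp
      linarith [h]
    -- sum of nonneg terms is zero
    have key : ∑ i, A i * (n i / A i - N / S) ^ 2 = 0 := by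
      have expand : ∀ i ∈ Finset.univ, A i * (n i / A i - N / S) ^ 2
          = (n i) ^ 2 / A i - 2 * (N / S) * n i + (N / S) ^ 2 * A i := by
        intro i _
        have hAi := (hA i).ne'
        have hSne := hS.ne'
        field_simp
        ring
      rw [Finset.sum_congr rfl expand, Finset.sum_add_distrib,
        Finset.sum_sub_distrib, hT, ← Finset.mul_sum, ← Finset.mul_sum,
        ← hNdef, ← hSdef]
      field_simp
      ring
    have each : ∀ i, n i / A i = N / S := by
      intro i
      have h0 := (Finset.sum_eq_zero_iff_of_nonneg (fun i _ =>
        mul_nonneg (hA i).le (sq_nonneg _))).mp key i (Finset.mem_univ i)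
      have := mul_eq_zero.mp h0
      rcases this with h1 | h2
      · exact absurd h1 (hA i).ne'
      · have := pow_eq_zero_iff (n := 2) (by norm_num) |>.mp h2
        linarith
    constructor
    · intro i
      have h1 : n i * S = N * A i :=
        (div_eq_div_iff (hA i).ne' hS.ne').mp (each i)
      nlinarith [mul_pos hpos (hA i)]
    · intro i j; rw [each i, each j]
  · rintro ⟨hnp, hd⟩
    obtain ⟨k⟩ := ‹Nonempty (Fin M)›
    set c := n k / A k with hc
    have hni : ∀ i, n i = c * A i := by
      intro i
      have h1 : n i * A k = n k * A i :=
        (div_eq_div_iff (hA i).ne' (hA k).ne').mp (hd i k)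
      rw [hc, div_mul_eq_mul_div, eq_div_iff (hA k).ne']
      linarith
    have hN : N = c * S := by
      rw [hNdef, hSdef, Finset.mul_sum]
      exact Finset.sum_congr rfl fun i _ => hni i
    have hT : (∑ i, (n i) ^ 2 / A i) = c ^ 2 * S := by
      rw [hSdef, Finset.mul_sum]
      refine Finset.sum_congr rfl fun i _ => ?_
      rw [hni i]
      field_simp [(hA i).ne']
    have hc0 : 0 < c := div_pos (hnp k) (hA k)
    rw [hT, hN]
    field_simp [hc0.ne', hS.ne']
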